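/- arXiv:2210.15066 — 2 statements merged into one kernel-verified Lean document; each statement's English description precedes it below -/
import Mathlib

section
/- Define, for a large integer N, functions on ℤ² × ℝ by û_N(n,τ) = 1_{n = N e₁} · 1_{[-1,1]}(τ + N²) and v̂_N(n,τ) = 1_{n = -N e₁} · 1_{[-1,1]}(τ + N²), where e₁ = (1,0). Then the space-time Fourier transform of the product of complex conjugates satisfies 𝓕(ū_N v̄_N)(n,τ) ≥ 1_{n=0} · 1_{[-1,1]}(-τ + 2N²) pointwise. Consequently ‖⟨n⟩^s ⟨τ+|n|²⟩^{b-1} 𝓕(ū_N v̄_N)‖_{ℓ²_n L²_τ} ≳ N^{2b-2}, while ‖u_N‖_{X^{s,b}} ∼ N^s and ‖v_N‖_{X^{s,b}} ∼ N^s. -/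
open MeasureTheory

noncomputable def jap (n : ℤ × ℤ) : ℝ := Real.sqrt (1 + ((n.1 : ℝ) ^ 2 + (n.2 : ℝ) ^ 2))

noncomputable def nsq (n : ℤ × ℤ) : ℝ := (n.1 : ℝ) ^ 2 + (n.2 : ℝ) ^ 2

noncomputable def jb (x : ℝ) : ℝ := Real.sqrt (1 + x ^ 2)

/-- The `X^{s,b}` norm of `û : ℤ² × ℝ → ℂ` (on the Fourier side). -/
noncomputable def Xnorm (s b : ℝ) (u : ℤ × ℤ → ℝ → ℂ) : ℝ :=
  Real.sqrt (∑' n : ℤ × ℤ, ∫ τ : ℝ, (jap n ^ s * jb (τ + nsq n) ^ b * ‖u n τ‖) ^ 2)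

/-- Fourier transform of the complex conjugate: `𝓕(ū)(n,τ) = conj û(-n,-τ)`. -/
noncomputable def conjFT (u : ℤ × ℤ → ℝ → ℂ) : ℤ × ℤ → ℝ → ℂ :=
  fun n τ => starRingEnd ℂ (u (-n) (-τ))

/-- Convolution on `ℤ² × ℝ` (Fourier transform of a product). -/
noncomputable def conv (u v : ℤ × ℤ → ℝ → ℂ) : ℤ × ℤ → ℝ → ℂ :=
  fun n τ => ∑' n₁ : ℤ × ℤ, ∫ τ₁ : ℝ, u n₁ τ₁ * v (n - n₁) (τ - τ₁)

/-- `û_N(n,τ) = 1_{n = N e₁} 1_{[-1,1]}(τ + N²)`. -/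
noncomputable def uN (N : ℕ) : ℤ × ℤ → ℝ → ℂ :=
  fun n τ => if n = ((N : ℤ), 0) then
    ((Set.indicator (Set.Icc (-1 : ℝ) 1) (fun _ => (1 : ℝ)) (τ + (N : ℝ) ^ 2) : ℝ) : ℂ)
  else 0

/-- `v̂_N(n,τ) = 1_{n = -N e₁} 1_{[-1,1]}(τ + N²)`. -/
noncomputable def vN (N : ℕ) : ℤ × ℤ → ℝ → ℂ :=
  fun n τ => if n = (-(N : ℤ), 0) then
    ((Set.indicator (Set.Icc (-1 : ℝ) 1) (fun _ => (1 : ℝ)) (τ + (N : ℝ) ^ 2) : ℝ) : ℂ)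
  else 0

noncomputable def Lc (N : ℕ) (τ : ℝ) : ℝ :=
  max (min ((N:ℝ)^2+1) (τ-(N:ℝ)^2+1) - max ((N:ℝ)^2-1) (τ-(N:ℝ)^2-1)) 0

lemma conjFT_uN (N : ℕ) : conjFT (uN N) = fun n τ =>
    if n = (-(N:ℤ), 0) then
      ((Set.indicator (Set.Icc (-1:ℝ) 1) (fun _ => (1:ℝ)) ((N:ℝ)^2 - τ) : ℝ) : ℂ) else 0 := by
  funext n τ
  simp only [conjFT, uN]
  have h : (-n = ((N:ℤ), 0)) ↔ (n = (-(N:ℤ), 0)) := by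
    constructor <;> intro h <;> [skip; skip] <;>
      · have := congrArg Neg.neg h; simpa [Prod.ext_iff, neg_eq_iff_eq_neg] using h
  by_cases hn : n = (-(N:ℤ), 0)
  · rw [if_pos (h.2 hn), if_pos hn]
    rw [Complex.conj_ofReal]
    norm_num [sub_eq_neg_add]
  · rw [if_neg (fun hh => hn (h.1 hh)), if_neg hn, map_zero]

lemma conjFT_vN (N : ℕ) : conjFT (vN N) = fun n τ =>
    if n = (((N:ℤ)), 0) then
      ((Set.indicator (Set.Icc (-1:ℝ) 1) (fun _ => (1:ℝ)) ((N:ℝ)^2 - τ) : ℝ) : ℂ) else 0 := by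
  funext n τ
  simp only [conjFT, vN]
  have h : (-n = (-(N:ℤ), 0)) ↔ (n = ((N:ℤ), 0)) := by
    constructor <;> intro h <;>
      · have := congrArg Neg.neg h; simpa [Prod.ext_iff, neg_eq_iff_eq_neg] using h
  by_cases hn : n = ((N:ℤ), 0)
  · rw [if_pos (h.2 hn), if_pos hn]
    rw [Complex.conj_ofReal]
    norm_num [sub_eq_neg_add]
  · rw [if_neg (fun hh => hn (h.1 hh)), if_neg hn, map_zero]

lemma ind_shift (a x : ℝ) :
    Set.indicator (Set.Icc (-1:ℝ) 1) (fun _ => (1:ℝ)) (a - x)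
      = Set.indicator (Set.Icc (a-1) (a+1)) (fun _ => (1:ℝ)) x := by
  simp only [Set.indicator_apply, Set.mem_Icc]
  congr 1
  simp only [eq_iff_iff]
  constructor <;> intro h <;> constructor <;> linarith [h.1, h.2]

lemma ind_shift' (a x : ℝ) :
    Set.indicator (Set.Icc (-1:ℝ) 1) (fun _ => (1:ℝ)) (x - a)
      = Set.indicator (Set.Icc (a-1) (a+1)) (fun _ => (1:ℝ)) x := by
  simp only [Set.indicator_apply, Set.mem_Icc]
  congr 1
  simp only [eq_iff_iff]
  constructor <;> intro h <;> constructor <;> linarith [h.1, h.2]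

lemma key_int (N : ℕ) (τ : ℝ) :
    (∫ τ₁ : ℝ, (Set.indicator (Set.Icc (-1:ℝ) 1) (fun _ => (1:ℝ)) ((N:ℝ)^2 - τ₁))
      * (Set.indicator (Set.Icc (-1:ℝ) 1) (fun _ => (1:ℝ)) ((N:ℝ)^2 - (τ - τ₁)))) = Lc N τ := by
  have EQ : ∀ τ₁ : ℝ,
      (Set.indicator (Set.Icc (-1:ℝ) 1) (fun _ => (1:ℝ)) ((N:ℝ)^2 - τ₁))
        * (Set.indicator (Set.Icc (-1:ℝ) 1) (fun _ => (1:ℝ)) ((N:ℝ)^2 - (τ - τ₁)))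
      = Set.indicator (Set.Icc (max ((N:ℝ)^2-1) (τ-(N:ℝ)^2-1)) (min ((N:ℝ)^2+1) (τ-(N:ℝ)^2+1)))
          (fun _ => (1:ℝ)) τ₁ := by
    intro τ₁
    rw [ind_shift]
    have : (N:ℝ)^2 - (τ - τ₁) = τ₁ - (τ - (N:ℝ)^2) := by ring
    rw [this, ind_shift']
    rw [← Set.Icc_inter_Icc]
    simp only [Set.indicator_apply, Set.mem_inter_iff]
    by_cases h1 : τ₁ ∈ Set.Icc ((N:ℝ)^2-1) ((N:ℝ)^2+1) <;>
      by_cases h2 : τ₁ ∈ Set.Icc (τ-(N:ℝ)^2-1) (τ-(N:ℝ)^2+1) <;>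
      simp [h1, h2]
  rw [MeasureTheory.integral_congr_ae (Filter.Eventually.of_forall EQ)]
  rw [MeasureTheory.integral_indicator_const (1:ℝ) measurableSet_Icc]
  rw [measureReal_def, Real.volume_Icc, smul_eq_mul, mul_one, ENNReal.toReal_ofReal']
  rfl

lemma conv_eq (N : ℕ) (n : ℤ × ℤ) (τ : ℝ) :
    conv (conjFT (uN N)) (conjFT (vN N)) n τ = if n = (0, 0) then ((Lc N τ : ℝ) : ℂ) else 0 := by
  simp only [conv, conjFT_uN, conjFT_vN]
  rw [tsum_eq_single (-(N:ℤ), 0) ?_]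
  · simp only [if_pos rfl, if_true]
    have harg : n - (-(N:ℤ), 0) = (((N:ℤ)), 0) ↔ n = (0, 0) := by
      constructor <;> intro h
      · have := sub_eq_iff_eq_add.1 h; simpa [Prod.ext_iff] using this
      · subst h; simp [Prod.ext_iff]
    by_cases hn : n = (0, 0)
    · rw [if_pos hn]
      have : ∀ τ₁ : ℝ, (if n - (-(N:ℤ), 0) = ((N:ℤ), 0) then
          ((Set.indicator (Set.Icc (-1:ℝ) 1) (fun _ => (1:ℝ)) ((N:ℝ)^2 - (τ - τ₁)) : ℝ) : ℂ) else 0)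
          = ((Set.indicator (Set.Icc (-1:ℝ) 1) (fun _ => (1:ℝ)) ((N:ℝ)^2 - (τ - τ₁)) : ℝ) : ℂ) := by
        intro τ₁; rw [if_pos (harg.2 hn)]
      simp_rw [this, ← Complex.ofReal_mul]
      exact integral_ofReal.trans (congrArg _ (key_int N τ))
    · rw [if_neg hn]
      have : ∀ τ₁ : ℝ, (if n - (-(N:ℤ), 0) = ((N:ℤ), 0) then
          ((Set.indicator (Set.Icc (-1:ℝ) 1) (fun _ => (1:ℝ)) ((N:ℝ)^2 - (τ - τ₁)) : ℝ) : ℂ) else 0)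
          = 0 := by
        intro τ₁; rw [if_neg (fun h => hn (harg.1 h))]
      simp_rw [this, mul_zero, integral_zero]
  · intro n₁ hn₁
    simp_rw [if_neg hn₁, zero_mul, integral_zero]

lemma rpow_between {c x y r : ℝ} (hx : 0 < x) (hc : 1 ≤ c) (h1 : x ≤ y) (h2 : y ≤ c * x) :
    min 1 (c^r) * x^r ≤ y^r ∧ y^r ≤ max 1 (c^r) * x^r := by
  have hy : 0 < y := lt_of_lt_of_le hx h1
  have hxr : (0:ℝ) < x^r := Real.rpow_pos_of_pos hx r
  rcases le_or_gt 0 r with hr | hr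
  · constructor
    · calc min 1 (c^r) * x^r ≤ 1 * x^r :=
            mul_le_mul_of_nonneg_right (min_le_left _ _) hxr.le
        _ = x^r := one_mul _
        _ ≤ y^r := Real.rpow_le_rpow hx.le h1 hr
    · calc y^r ≤ (c*x)^r := Real.rpow_le_rpow hy.le h2 hr
        _ = c^r * x^r := Real.mul_rpow (by linarith) hx.le
        _ ≤ max 1 (c^r) * x^r := mul_le_mul_of_nonneg_right (le_max_right _ _) hxr.le
  · constructor
    · calc min 1 (c^r) * x^r ≤ c^r * x^r :=
            mul_le_mul_of_nonneg_right (min_le_right _ _) hxr.le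
        _ = (c*x)^r := (Real.mul_rpow (by linarith) hx.le).symm
        _ ≤ y^r := Real.rpow_le_rpow_of_nonpos hy h2 hr.le
    · calc y^r ≤ x^r := Real.rpow_le_rpow_of_nonpos hx h1 hr.le
        _ ≤ max 1 (c^r) * x^r := le_mul_of_one_le_left hxr.le (le_max_left _ _)

lemma jb_ge_one (x : ℝ) : 1 ≤ jb x := by
  have := Real.sqrt_le_sqrt (show (1:ℝ) ≤ 1 + x^2 by nlinarith [sq_nonneg x])
  simpa [jb] using this

lemma jb_pos (x : ℝ) : 0 < jb x := lt_of_lt_of_le one_pos (jb_ge_one x)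

lemma jb_cont : Continuous jb := Real.continuous_sqrt.comp (continuous_const.add (continuous_pow 2))

lemma jb_rpow_cont (r : ℝ) : Continuous (fun x => jb x ^ r) :=
  jb_cont.rpow_const (fun x => Or.inl (ne_of_gt (jb_pos x)))

lemma jb_le (x : ℝ) : jb x ≤ 1 + |x| := by
  rw [jb]
  have : (1 + x^2) ≤ (1 + |x|)^2 := by nlinarith [abs_nonneg x, sq_abs x]
  calc Real.sqrt (1 + x^2) ≤ Real.sqrt ((1+|x|)^2) := Real.sqrt_le_sqrt this
    _ = 1 + |x| := Real.sqrt_sq (by positivity)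

lemma jb_ge_abs (x : ℝ) : |x| ≤ jb x := by
  rw [jb]
  calc |x| = Real.sqrt (x^2) := (Real.sqrt_sq_eq_abs x).symm
    _ ≤ Real.sqrt (1 + x^2) := Real.sqrt_le_sqrt (by linarith)

lemma Xnorm_single (s b : ℝ) (N : ℕ) (k : ℤ) (hk : ((k:ℝ))^2 = ((N:ℝ))^2)
    (w : ℤ × ℤ → ℝ → ℂ)
    (hw : w = fun n τ => if n = (k, 0) then
      ((Set.indicator (Set.Icc (-1:ℝ) 1) (fun _ => (1:ℝ)) (τ + (N:ℝ)^2) : ℝ) : ℂ) else 0) :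
    Xnorm s b w = Real.sqrt (∫ σ in Set.Icc (-1:ℝ) 1,
      (Real.sqrt (1 + (N:ℝ)^2) ^ s * jb σ ^ b) ^ 2) := by
  subst hw
  rw [Xnorm]
  congr 1
  rw [tsum_eq_single (k, 0) ?_]
  · have hjap : jap (k, 0) = Real.sqrt (1 + (N:ℝ)^2) := by
      simp [jap, hk]
    have hnsq : nsq (k, 0) = (N:ℝ)^2 := by
      simp [nsq, hk]
    simp only [if_pos rfl, if_true, hjap, hnsq]
    have hnorm : ∀ x : ℝ,
        ‖((Set.indicator (Set.Icc (-1:ℝ) 1) (fun _ => (1:ℝ)) x : ℝ) : ℂ)‖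
          = Set.indicator (Set.Icc (-1:ℝ) 1) (fun _ => (1:ℝ)) x := by
      intro x
      rw [Complex.norm_real, Real.norm_eq_abs, abs_of_nonneg]
      exact Set.indicator_nonneg (fun _ _ => zero_le_one) x
    simp_rw [hnorm]
    have hshift : (∫ τ : ℝ, (Real.sqrt (1 + (N:ℝ)^2) ^ s * jb (τ + (N:ℝ)^2) ^ b *
        Set.indicator (Set.Icc (-1:ℝ) 1) (fun _ => (1:ℝ)) (τ + (N:ℝ)^2)) ^ 2)
        = ∫ σ : ℝ, (Real.sqrt (1 + (N:ℝ)^2) ^ s * jb σ ^ b *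
        Set.indicator (Set.Icc (-1:ℝ) 1) (fun _ => (1:ℝ)) σ) ^ 2 :=
      integral_add_right_eq_self (fun σ => (Real.sqrt (1 + (N:ℝ)^2) ^ s * jb σ ^ b *
        Set.indicator (Set.Icc (-1:ℝ) 1) (fun _ => (1:ℝ)) σ) ^ 2) ((N:ℝ)^2)
    rw [hshift]
    have hind : ∀ σ : ℝ, (Real.sqrt (1 + (N:ℝ)^2) ^ s * jb σ ^ b *
        Set.indicator (Set.Icc (-1:ℝ) 1) (fun _ => (1:ℝ)) σ) ^ 2
        = Set.indicator (Set.Icc (-1:ℝ) 1)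
            (fun σ' => (Real.sqrt (1 + (N:ℝ)^2) ^ s * jb σ' ^ b) ^ 2) σ := by
      intro σ
      by_cases hσ : σ ∈ Set.Icc (-1:ℝ) 1
      · rw [Set.indicator_of_mem hσ, Set.indicator_of_mem hσ, mul_one]
      · rw [Set.indicator_of_notMem hσ, Set.indicator_of_notMem hσ, mul_zero,
          zero_pow two_ne_zero]
    simp_rw [hind]
    rw [MeasureTheory.integral_indicator measurableSet_Icc]
  · intro n hn
    simp_rw [if_neg hn, norm_zero, mul_zero, zero_pow two_ne_zero, integral_zero]

lemma single_bounds (s b : ℝ) (N : ℕ) (hN : 1 ≤ N) :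
    min 1 ((2:ℝ)^s) * min 1 ((2:ℝ)^b) * (N:ℝ)^s
      ≤ Real.sqrt (∫ σ in Set.Icc (-1:ℝ) 1,
          (Real.sqrt (1 + (N:ℝ)^2) ^ s * jb σ ^ b) ^ 2)
    ∧ Real.sqrt (∫ σ in Set.Icc (-1:ℝ) 1,
          (Real.sqrt (1 + (N:ℝ)^2) ^ s * jb σ ^ b) ^ 2)
      ≤ max 1 ((2:ℝ)^s) * (2 * max 1 ((2:ℝ)^b)) * (N:ℝ)^s := by
  have hN1 : (1:ℝ) ≤ (N:ℝ) := by exact_mod_cast hN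
  have hNpos : (0:ℝ) < (N:ℝ) := lt_of_lt_of_le one_pos hN1
  set A := Real.sqrt (1 + (N:ℝ)^2) ^ s with hA
  -- bounds for the base
  have hbase1 : (N:ℝ) ≤ Real.sqrt (1 + (N:ℝ)^2) := by
    calc (N:ℝ) = Real.sqrt ((N:ℝ)^2) := (Real.sqrt_sq hNpos.le).symm
      _ ≤ Real.sqrt (1 + (N:ℝ)^2) := Real.sqrt_le_sqrt (by linarith)
  have hbase2 : Real.sqrt (1 + (N:ℝ)^2) ≤ 2 * (N:ℝ) := by
    calc Real.sqrt (1 + (N:ℝ)^2) ≤ Real.sqrt ((2*(N:ℝ))^2) :=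
          Real.sqrt_le_sqrt (by nlinarith)
      _ = 2 * (N:ℝ) := Real.sqrt_sq (by positivity)
  have hAb := rpow_between hNpos (by norm_num) hbase1 hbase2 (r := s)
  set p := min 1 ((2:ℝ)^s) with hp
  set P := max 1 ((2:ℝ)^s) with hP
  set m := min 1 ((2:ℝ)^b) with hm
  set M := max 1 ((2:ℝ)^b) with hM
  have hppos : 0 < p := lt_min one_pos (Real.rpow_pos_of_pos two_pos s)
  have hmpos : 0 < m := lt_min one_pos (Real.rpow_pos_of_pos two_pos b)
  have hApos : 0 < A := Real.rpow_pos_of_pos (lt_of_lt_of_le hNpos hbase1) s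
  have hNs : (0:ℝ) < (N:ℝ)^s := Real.rpow_pos_of_pos hNpos s
  -- bounds for jb on [-1,1]
  have hjbb : ∀ σ ∈ Set.Icc (-1:ℝ) 1, m ≤ jb σ ^ b ∧ jb σ ^ b ≤ M := by
    intro σ hσ
    have h2 : jb σ ≤ 2 * 1 := by
      have := jb_le σ
      have habs : |σ| ≤ 1 := abs_le.2 ⟨hσ.1, hσ.2⟩
      linarith
    have := rpow_between one_pos (by norm_num) (jb_ge_one σ) h2 (r := b)
    rw [Real.one_rpow, mul_one, mul_one] at this
    exact this
  -- integrand bounds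
  have hlow : ∀ σ ∈ Set.Icc (-1:ℝ) 1, (A * m)^2 ≤ (A * jb σ ^ b)^2 := by
    intro σ hσ
    exact pow_le_pow_left₀ (mul_nonneg hApos.le hmpos.le)
      (mul_le_mul_of_nonneg_left (hjbb σ hσ).1 hApos.le) 2
  have hhigh : ∀ σ ∈ Set.Icc (-1:ℝ) 1, (A * jb σ ^ b)^2 ≤ (A * M)^2 := by
    intro σ hσ
    have h0 : 0 ≤ A * jb σ ^ b :=
      mul_nonneg hApos.le (Real.rpow_nonneg (jb_pos σ).le b)
    exact pow_le_pow_left₀ h0 (mul_le_mul_of_nonneg_left (hjbb σ hσ).2 hApos.le) 2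
  have hcont : Continuous (fun σ => (A * jb σ ^ b)^2) :=
    (continuous_const.mul (jb_rpow_cont b)).pow 2
  have hInt : IntegrableOn (fun σ => (A * jb σ ^ b)^2) (Set.Icc (-1:ℝ) 1) volume :=
    hcont.integrableOn_Icc
  have hIntc : ∀ c : ℝ, IntegrableOn (fun _ => c) (Set.Icc (-1:ℝ) 1) volume :=
    fun c => integrableOn_const measure_Icc_lt_top.ne (by simp)
  have hvol : (volume (Set.Icc (-1:ℝ) 1)).toReal = 2 := by
    rw [Real.volume_Icc]
    norm_num
  have hIlow : 2 * (A*m)^2 ≤ ∫ σ in Set.Icc (-1:ℝ) 1, (A * jb σ ^ b)^2 := by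
    have := setIntegral_mono_on (hIntc ((A*m)^2)) hInt measurableSet_Icc hlow
    rwa [setIntegral_const, measureReal_def, hvol, smul_eq_mul] at this
  have hIhigh : (∫ σ in Set.Icc (-1:ℝ) 1, (A * jb σ ^ b)^2) ≤ 2 * (A*M)^2 := by
    have := setIntegral_mono_on hInt (hIntc ((A*M)^2)) measurableSet_Icc hhigh
    rwa [setIntegral_const, measureReal_def, hvol, smul_eq_mul] at this
  constructor
  · rw [Real.le_sqrt (by positivity) (le_trans (by positivity) hIlow)]
    have h1 : p * m * (N:ℝ)^s ≤ A * m := by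
      have := mul_le_mul_of_nonneg_right hAb.1 hmpos.le
      calc p * m * (N:ℝ)^s = p * (N:ℝ)^s * m := by ring
        _ ≤ A * m := this
    have hsq : (p * m * (N:ℝ)^s)^2 ≤ (A*m)^2 :=
      pow_le_pow_left₀ (by positivity) h1 2
    linarith [sq_nonneg (A*m)]
  · have h2 : A * M ≤ P * (N:ℝ)^s * M := by
      have hMpos : (0:ℝ) < M := lt_of_lt_of_le one_pos (le_max_left _ _)
      exact mul_le_mul_of_nonneg_right hAb.2 hMpos.le
    have hMpos : (0:ℝ) < M := lt_of_lt_of_le one_pos (le_max_left _ _)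
    have hPpos : (0:ℝ) < P := lt_of_lt_of_le one_pos (le_max_left _ _)
    calc Real.sqrt (∫ σ in Set.Icc (-1:ℝ) 1, (A * jb σ ^ b)^2)
        ≤ Real.sqrt ((2 * (P * (N:ℝ)^s * M))^2) := by
          apply Real.sqrt_le_sqrt
          have hsq2 : (A*M)^2 ≤ (P * (N:ℝ)^s * M)^2 :=
            pow_le_pow_left₀ (mul_nonneg hApos.le hMpos.le) h2 2
          have hexp : (2 * (P * (N:ℝ)^s * M))^2 = 4 * (P * (N:ℝ)^s * M)^2 := by ring
          rw [hexp]
          linarith [sq_nonneg (P * (N:ℝ)^s * M)]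
      _ = 2 * (P * (N:ℝ)^s * M) := Real.sqrt_sq (by positivity)
      _ = P * (2 * M) * (N:ℝ)^s := by ring

lemma sq_rpow (N : ℕ) (r : ℝ) (hN : 0 < (N:ℝ)) : ((N:ℝ)^2) ^ r = (N:ℝ) ^ (2*r) := by
  rw [← Real.rpow_natCast (N:ℝ) 2, ← Real.rpow_mul hN.le]
  norm_num

lemma Lc_nonneg (N : ℕ) (τ : ℝ) : 0 ≤ Lc N τ := le_max_right _ _

lemma Lc_cont (N : ℕ) : Continuous (Lc N) := by
  unfold Lc
  fun_prop

lemma Lc_ge_one (N : ℕ) (hN : 1 ≤ N) {τ : ℝ}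
    (h1 : 2*(N:ℝ)^2 - 1 ≤ τ) (h2 : τ ≤ 2*(N:ℝ)^2 + 1) : 1 ≤ Lc N τ := by
  have hN1 : (1:ℝ) ≤ (N:ℝ) := by exact_mod_cast hN
  have hN2 : (1:ℝ) ≤ (N:ℝ)^2 := by nlinarith
  rw [Lc]
  rcases le_total τ (2*(N:ℝ)^2) with hτ | hτ
  · have hmin : min ((N:ℝ)^2+1) (τ-(N:ℝ)^2+1) = τ-(N:ℝ)^2+1 := min_eq_right (by linarith)
    have hmax : max ((N:ℝ)^2-1) (τ-(N:ℝ)^2-1) = (N:ℝ)^2-1 := max_eq_left (by linarith)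
    rw [hmin, hmax]
    calc (1:ℝ) ≤ τ-(N:ℝ)^2+1 - ((N:ℝ)^2-1) := by linarith
      _ ≤ _ := le_max_left _ _
  · have hmin : min ((N:ℝ)^2+1) (τ-(N:ℝ)^2+1) = (N:ℝ)^2+1 := min_eq_left (by linarith)
    have hmax : max ((N:ℝ)^2-1) (τ-(N:ℝ)^2-1) = τ-(N:ℝ)^2-1 := max_eq_right (by linarith)
    rw [hmin, hmax]
    calc (1:ℝ) ≤ (N:ℝ)^2+1 - (τ-(N:ℝ)^2-1) := by linarith
      _ ≤ _ := le_max_left _ _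

lemma Lc_zero (N : ℕ) {τ : ℝ} (h : τ ∉ Set.Icc (2*(N:ℝ)^2 - 3) (2*(N:ℝ)^2 + 3)) :
    Lc N τ = 0 := by
  rw [Set.mem_Icc, not_and_or, not_le, not_le] at h
  rw [Lc, max_eq_right]
  rcases h with h | h
  · have : min ((N:ℝ)^2+1) (τ-(N:ℝ)^2+1) ≤ τ-(N:ℝ)^2+1 := min_le_right _ _
    have : (N:ℝ)^2-1 ≤ max ((N:ℝ)^2-1) (τ-(N:ℝ)^2-1) := le_max_left _ _
    nlinarith [min_le_right ((N:ℝ)^2+1) (τ-(N:ℝ)^2+1), le_max_left ((N:ℝ)^2-1) (τ-(N:ℝ)^2-1)]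
  · nlinarith [min_le_left ((N:ℝ)^2+1) (τ-(N:ℝ)^2+1), le_max_right ((N:ℝ)^2-1) (τ-(N:ℝ)^2-1)]

lemma conv_lower (s b : ℝ) (N : ℕ) (hN : 1 ≤ N) :
    min 1 ((4:ℝ)^(b-1)) * (N:ℝ)^(2*b-2)
      ≤ Xnorm s (b-1) (conv (conjFT (uN N)) (conjFT (vN N))) := by
  have hN1 : (1:ℝ) ≤ (N:ℝ) := by exact_mod_cast hN
  have hNpos : (0:ℝ) < (N:ℝ) := lt_of_lt_of_le one_pos hN1
  have hN2 : (1:ℝ) ≤ (N:ℝ)^2 := by nlinarith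
  set c2 := min 1 ((4:ℝ)^(b-1)) with hc2
  have hc2pos : 0 < c2 := lt_min one_pos (Real.rpow_pos_of_pos (by norm_num) _)
  have hNr : (0:ℝ) < (N:ℝ)^(2*b-2) := Real.rpow_pos_of_pos hNpos _
  rw [Xnorm]
  rw [tsum_eq_single ((0:ℤ), (0:ℤ)) ?_]
  swap
  · intro n hn
    have : ∀ τ : ℝ, ‖conv (conjFT (uN N)) (conjFT (vN N)) n τ‖ = 0 := by
      intro τ; rw [conv_eq, if_neg hn, norm_zero]
    simp_rw [this, mul_zero, zero_pow two_ne_zero, integral_zero]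
  · have hjap : jap ((0:ℤ), (0:ℤ)) = 1 := by simp [jap]
    have hnsq : nsq ((0:ℤ), (0:ℤ)) = 0 := by simp [nsq]
    have hnorm : ∀ τ : ℝ, ‖conv (conjFT (uN N)) (conjFT (vN N)) ((0:ℤ),(0:ℤ)) τ‖ = Lc N τ := by
      intro τ
      rw [conv_eq, if_pos rfl, Complex.norm_real, Real.norm_eq_abs,
        abs_of_nonneg (Lc_nonneg N τ)]
    simp_rw [hjap, hnsq, hnorm, Real.one_rpow, one_mul, add_zero]
    -- goal : c2 * N^(2b-2) ≤ √(∫ (jb τ^(b-1) * Lc N τ)^2)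
    set G := fun τ : ℝ => (jb τ ^ (b-1) * Lc N τ)^2 with hG
    have hGcont : Continuous G := ((jb_rpow_cont (b-1)).mul (Lc_cont N)).pow 2
    have hGsupp : HasCompactSupport G := by
      apply HasCompactSupport.intro (isCompact_Icc
        (a := 2*(N:ℝ)^2 - 3) (b := 2*(N:ℝ)^2 + 3))
      intro τ hτ
      simp only [hG, Lc_zero N hτ, mul_zero, zero_pow two_ne_zero]
    have hGint : Integrable G := hGcont.integrable_of_hasCompactSupport hGsupp
    set T := 2*(N:ℝ)^2 with hT
    have hpt : ∀ τ : ℝ, Set.indicator (Set.Icc (T - 2⁻¹) (T + 2⁻¹))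
        (fun _ => (c2 * (N:ℝ)^(2*b-2))^2) τ ≤ G τ := by
      intro τ
      by_cases hτ : τ ∈ Set.Icc (T - 2⁻¹) (T + 2⁻¹)
      · rw [Set.indicator_of_mem hτ]
        obtain ⟨hτ1, hτ2⟩ := hτ
        have hjb1 : (N:ℝ)^2 ≤ jb τ := by
          have := jb_ge_abs τ
          have : τ ≤ |τ| := le_abs_self τ
          have h := jb_ge_abs τ
          have : τ ≤ jb τ := le_trans (le_abs_self τ) h
          nlinarith
        have hjb2 : jb τ ≤ 4 * (N:ℝ)^2 := by
          have h := jb_le τ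
          have habs : |τ| ≤ T + 2⁻¹ := by
            rw [abs_le]
            constructor <;> nlinarith
          nlinarith
        have hrb := rpow_between (x := (N:ℝ)^2) (by positivity) (by norm_num) hjb1 hjb2
          (r := b - 1)
        have hNN : ((N:ℝ)^2)^(b-1) = (N:ℝ)^(2*b-2) := by
          rw [sq_rpow N (b-1) hNpos]
          ring_nf
        rw [hNN] at hrb
        have hL : 1 ≤ Lc N τ := Lc_ge_one N hN (by nlinarith) (by nlinarith)
        have hfac : c2 * (N:ℝ)^(2*b-2) ≤ jb τ ^ (b-1) * Lc N τ := by
          calc c2 * (N:ℝ)^(2*b-2) ≤ jb τ ^ (b-1) := hrb.1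
            _ = jb τ ^ (b-1) * 1 := (mul_one _).symm
            _ ≤ jb τ ^ (b-1) * Lc N τ := by
                apply mul_le_mul_of_nonneg_left hL (Real.rpow_nonneg (jb_pos τ).le _)
        exact pow_le_pow_left₀ (by positivity) hfac 2
      · rw [Set.indicator_of_notMem hτ]
        exact sq_nonneg _
    have hIndInt : Integrable (Set.indicator (Set.Icc (T - 2⁻¹) (T + 2⁻¹))
        (fun _ => (c2 * (N:ℝ)^(2*b-2))^2)) :=
      (integrable_indicator_iff measurableSet_Icc).2
        (integrableOn_const measure_Icc_lt_top.ne enorm_ne_top)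
    have hmono := integral_mono hIndInt hGint hpt
    rw [integral_indicator_const _ measurableSet_Icc, measureReal_def, Real.volume_Icc, smul_eq_mul] at hmono
    have hvol : (ENNReal.ofReal (T + 2⁻¹ - (T - 2⁻¹))).toReal = 1 := by
      rw [ENNReal.toReal_ofReal (by norm_num)]
      ring
    rw [hvol, one_mul] at hmono
    rw [Real.le_sqrt (by positivity) (le_trans (sq_nonneg _) hmono)]
    exact hmono

lemma part1 (N : ℕ) (hN : 1 ≤ N) (n : ℤ × ℤ) (τ : ℝ) :
    (if n = (0, 0) then
        Set.indicator (Set.Icc (-1 : ℝ) 1) (fun _ => (1 : ℝ)) (-τ + 2 * (N : ℝ) ^ 2)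
      else 0)
    ≤ ‖conv (conjFT (uN N)) (conjFT (vN N)) n τ‖ := by
  by_cases hn : n = (0, 0)
  · rw [if_pos hn, hn]
    have hnorm : ‖conv (conjFT (uN N)) (conjFT (vN N)) ((0:ℤ),(0:ℤ)) τ‖ = Lc N τ := by
      rw [conv_eq, if_pos rfl, Complex.norm_real, Real.norm_eq_abs,
        abs_of_nonneg (Lc_nonneg N τ)]
    rw [hnorm]
    by_cases hmem : (-τ + 2 * (N:ℝ)^2) ∈ Set.Icc (-1:ℝ) 1
    · rw [Set.indicator_of_mem hmem]
      obtain ⟨h1, h2⟩ := hmem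
      exact Lc_ge_one N hN (by linarith) (by linarith)
    · rw [Set.indicator_of_notMem hmem]
      exact Lc_nonneg N τ
  · rw [if_neg hn]
    exact norm_nonneg _

/-- the Example 1 computations: `𝓕(ū_N v̄_N)(n,τ) ≥ 1_{n=0}1_{[-1,1]}(-τ+2N²)`
pointwise, `‖⟨n⟩^s⟨τ+|n|²⟩^{b-1}𝓕(ū_N v̄_N)‖ ≳ N^{2b-2}`, and
`‖u_N‖_{X^{s,b}} ∼ ‖v_N‖_{X^{s,b}} ∼ N^s`. -/
theorem stmt3 (s b : ℝ) :
    ∃ c C : ℝ, 0 < c ∧ 0 < C ∧ ∀ N : ℕ, 1 ≤ N →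
      (∀ (n : ℤ × ℤ) (τ : ℝ),
        (if n = (0, 0) then
            Set.indicator (Set.Icc (-1 : ℝ) 1) (fun _ => (1 : ℝ)) (-τ + 2 * (N : ℝ) ^ 2)
          else 0)
        ≤ ‖conv (conjFT (uN N)) (conjFT (vN N)) n τ‖)
      ∧ c * (N : ℝ) ^ (2 * b - 2) ≤ Xnorm s (b - 1) (conv (conjFT (uN N)) (conjFT (vN N)))
      ∧ c * (N : ℝ) ^ s ≤ Xnorm s b (uN N) ∧ Xnorm s b (uN N) ≤ C * (N : ℝ) ^ s
      ∧ c * (N : ℝ) ^ s ≤ Xnorm s b (vN N) ∧ Xnorm s b (vN N) ≤ C * (N : ℝ) ^ s := by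
  have hppos : 0 < min 1 ((2:ℝ)^s) := lt_min one_pos (Real.rpow_pos_of_pos two_pos s)
  have hmpos : 0 < min 1 ((2:ℝ)^b) := lt_min one_pos (Real.rpow_pos_of_pos two_pos b)
  have hc2pos : 0 < min 1 ((4:ℝ)^(b-1)) :=
    lt_min one_pos (Real.rpow_pos_of_pos (by norm_num) _)
  refine ⟨min (min 1 ((2:ℝ)^s) * min 1 ((2:ℝ)^b)) (min 1 ((4:ℝ)^(b-1))),
    max 1 ((2:ℝ)^s) * (2 * max 1 ((2:ℝ)^b)), lt_min (by positivity) hc2pos, by positivity,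
    fun N hN => ?_⟩
  have hNpos : (0:ℝ) < (N:ℝ) := by exact_mod_cast Nat.lt_of_lt_of_le Nat.zero_lt_one hN
  have hNs : (0:ℝ) ≤ (N:ℝ)^s := (Real.rpow_pos_of_pos hNpos s).le
  have hNr : (0:ℝ) ≤ (N:ℝ)^(2*b-2) := (Real.rpow_pos_of_pos hNpos _).le
  have huX : Xnorm s b (uN N) = Real.sqrt (∫ σ in Set.Icc (-1:ℝ) 1,
      (Real.sqrt (1 + (N:ℝ)^2) ^ s * jb σ ^ b) ^ 2) :=
    Xnorm_single s b N (N:ℤ) (by push_cast; ring) (uN N) rfl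
  have hvX : Xnorm s b (vN N) = Real.sqrt (∫ σ in Set.Icc (-1:ℝ) 1,
      (Real.sqrt (1 + (N:ℝ)^2) ^ s * jb σ ^ b) ^ 2) :=
    Xnorm_single s b N (-(N:ℤ)) (by push_cast; ring) (vN N) rfl
  obtain ⟨hlo, hhi⟩ := single_bounds s b N hN
  refine ⟨part1 N hN, ?_, ?_, ?_, ?_, ?_⟩
  · calc min (min 1 ((2:ℝ)^s) * min 1 ((2:ℝ)^b)) (min 1 ((4:ℝ)^(b-1))) * (N:ℝ)^(2*b-2)
        ≤ min 1 ((4:ℝ)^(b-1)) * (N:ℝ)^(2*b-2) :=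
          mul_le_mul_of_nonneg_right (min_le_right _ _) hNr
      _ ≤ _ := conv_lower s b N hN
  · calc min (min 1 ((2:ℝ)^s) * min 1 ((2:ℝ)^b)) (min 1 ((4:ℝ)^(b-1))) * (N:ℝ)^s
        ≤ min 1 ((2:ℝ)^s) * min 1 ((2:ℝ)^b) * (N:ℝ)^s :=
          mul_le_mul_of_nonneg_right (min_le_left _ _) hNs
      _ ≤ Xnorm s b (uN N) := by rw [huX]; exact hlo
  · rw [huX]; exact hhi
  · calc min (min 1 ((2:ℝ)^s) * min 1 ((2:ℝ)^b)) (min 1 ((4:ℝ)^(b-1))) * (N:ℝ)^s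
        ≤ min 1 ((2:ℝ)^s) * min 1 ((2:ℝ)^b) * (N:ℝ)^s :=
          mul_le_mul_of_nonneg_right (min_le_left _ _) hNs
      _ ≤ Xnorm s b (vN N) := by rw [hvX]; exact hlo
  · rw [hvX]; exact hhi
end

section
/- (Frequency separation forces high modulation) Suppose n, n₁, n₂ ∈ ℤ² with n + n₁ + n₂ = 0 and n ≠ 0, and τ, τ₁, τ₂ ∈ ℝ with τ + τ₁ + τ₂ = 0. If |τ + |n|²| < 2^{-10}|n|² and |τ₁ + |n₁|²| < 2^{-10}|n₁|², then τ₂ > |n|²/2, and consequently |τ₂ + |n₂|²| ≥ |n₂|² and |τ₂ + |n₂|²| ≥ |n|²/2. -/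
/-- frequency separation forces high modulation for the nonlinearity `ū²`. -/
theorem stmt9 (n n₁ n₂ : ℤ × ℤ) (hn : n + n₁ + n₂ = 0) (hne : n ≠ 0)
    (τ τ₁ τ₂ : ℝ) (hτ : τ + τ₁ + τ₂ = 0)
    (h1 : |τ + nsq n| < (2 : ℝ) ^ (-10 : ℤ) * nsq n)
    (h2 : |τ₁ + nsq n₁| < (2 : ℝ) ^ (-10 : ℤ) * nsq n₁) :
    nsq n / 2 < τ₂ ∧ nsq n₂ ≤ |τ₂ + nsq n₂| ∧ nsq n / 2 ≤ |τ₂ + nsq n₂| := by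
  have hn0 : 0 < nsq n := by
    have h : (n.1 : ℝ) ≠ 0 ∨ (n.2 : ℝ) ≠ 0 := by
      by_contra hc
      push_neg at hc
      exact hne (Prod.ext (by exact_mod_cast hc.1) (by exact_mod_cast hc.2))
    unfold nsq
    rcases h with h | h
    · positivity
    · positivity
  have hn1 : 0 ≤ nsq n₁ := by unfold nsq; positivity
  have hn2 : 0 ≤ nsq n₂ := by unfold nsq; positivity
  rw [abs_lt] at h1 h2
  have hpow : (2 : ℝ) ^ (-10 : ℤ) = 1 / 1024 := by norm_num
  rw [hpow] at h1 h2
  have hτ2 : nsq n / 2 < τ₂ := by nlinarith [h1.1, h1.2, h2.1, h2.2]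
  have hτ2pos : 0 < τ₂ := lt_trans (by linarith) hτ2
  have habs : |τ₂ + nsq n₂| = τ₂ + nsq n₂ := abs_of_pos (by linarith)
  refine ⟨hτ2, ?_, ?_⟩ <;> rw [habs] <;> linarith
end
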